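/- Let V₁, V₂ be real-valued functions that are twice continuously differentiable on a neighborhood of x₀ ∈ ℝ^n, with V₁ ≥ 0 near x₀, V₁(x₀) = 0, V₂(x₀) = 0, ∇V₂(x₀) = 0, and such that the complex symmetric matrix V''(x₀) = V₁''(x₀) + iV₂''(x₀) is invertible. Then there exist constants c > 0, C > 0 and r > 0 such that c·|y|² ≤ V₁(x₀ + y) + |∇V₂(x₀ + y)|² ≤ C·|y|² for all |y| ≤ r. -/

import Mathlib

set_option maxHeartbeats 4000000

noncomputable section

open Metric

section Helpers

open Asymptotics in
lemma taylor2' {E : Type*} [NormedAddCommGroup E] [NormedSpace ℝ E]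
    (f : E → ℝ) (x₀ : E) (hf : ContDiffAt ℝ 2 f x₀) (h0 : f x₀ = 0)
    (h1 : fderiv ℝ f x₀ = 0) {ε : ℝ} (hε : 0 < ε) :
    ∃ δ > 0, ∀ y : E, ‖y‖ ≤ δ →
      |f (x₀ + y) - fderiv ℝ (fderiv ℝ f) x₀ y y / 2| ≤ ε * ‖y‖ ^ 2 := by
  obtain ⟨u, hu, hcd⟩ := hf.contDiffOn (le_refl 2) (by simp)
  obtain ⟨δ₁, hδ₁pos, hball⟩ := Metric.mem_nhds_iff.1 hu
  have hdiff : ∀ z ∈ ball x₀ δ₁, DifferentiableAt ℝ f z := by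
    intro z hz
    have := (hcd.mono hball).differentiableOn (by norm_num)
    exact (this z hz).differentiableAt (isOpen_ball.mem_nhds hz)
  set φ'' := fderiv ℝ (fderiv ℝ f) x₀ with hφ''
  have hf'' : HasFDerivAt (fderiv ℝ f) φ'' x₀ :=
    ((hf.fderiv_right (m := 1) (by norm_num)).differentiableAt one_ne_zero).hasFDerivAt
  have hlo := hf''.isLittleO.bound hε
  obtain ⟨δ₂, hδ₂pos, hb⟩ := Metric.eventually_nhds_iff.1 hlo
  refine ⟨min (δ₁/2) (δ₂/2), by positivity, fun y hy => ?_⟩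
  have hy1 : ‖y‖ < δ₁ := lt_of_le_of_lt (hy.trans (min_le_left _ _)) (by linarith)
  have hy2 : ‖y‖ < δ₂ := lt_of_le_of_lt (hy.trans (min_le_right _ _)) (by linarith)
  set g : ℝ → ℝ := fun t => f (x₀ + t • y) - t^2/2 * (φ'' y y) with hg
  set g' : ℝ → ℝ := fun t => fderiv ℝ f (x₀ + t • y) y - t * (φ'' y y) with hg'
  have hmem : ∀ t ∈ Set.Icc (0:ℝ) 1, x₀ + t • y ∈ ball x₀ δ₁ := by
    intro t ht
    simp only [mem_ball, dist_self_add_left, norm_smul, Real.norm_eq_abs]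
    calc |t| * ‖y‖ ≤ 1 * ‖y‖ := by
          apply mul_le_mul_of_nonneg_right _ (norm_nonneg _)
          rw [abs_le]; constructor <;> [linarith [ht.1]; exact ht.2]
      _ < δ₁ := by rwa [one_mul]
  have hderiv : ∀ t ∈ Set.Icc (0:ℝ) 1, HasDerivWithinAt g (g' t) (Set.Icc 0 1) t := by
    intro t ht
    have hline : HasDerivAt (fun t : ℝ => x₀ + t • y) y t := by
      simpa using ((hasDerivAt_id t).smul_const y).const_add x₀
    have h1' : HasDerivAt (fun t : ℝ => f (x₀ + t • y)) (fderiv ℝ f (x₀ + t • y) y) t :=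
      (hdiff _ (hmem t ht)).hasFDerivAt.comp_hasDerivAt t hline
    have h2' : HasDerivAt (fun t : ℝ => t^2/2 * (φ'' y y)) (t * (φ'' y y)) t := by
      have := ((hasDerivAt_pow 2 t).div_const 2).mul_const (φ'' y y)
      exact this.congr_deriv (by rw [show (2:ℕ) - 1 = 1 from rfl]; ring)
    exact (h1'.sub h2').hasDerivWithinAt
  have hbound : ∀ t ∈ Set.Icc (0:ℝ) 1, ‖g' t‖ ≤ ε * ‖y‖ ^ 2 := by
    intro t ht
    have hzb : dist (x₀ + t • y) x₀ < δ₂ := by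
      simp only [dist_self_add_left, norm_smul, Real.norm_eq_abs]
      calc |t| * ‖y‖ ≤ 1 * ‖y‖ := by
            apply mul_le_mul_of_nonneg_right _ (norm_nonneg _)
            rw [abs_le]; constructor <;> [linarith [ht.1]; exact ht.2]
        _ < δ₂ := by rwa [one_mul]
    have := hb hzb
    rw [h1] at this
    have key : ‖fderiv ℝ f (x₀ + t • y) - φ'' (t • y)‖ ≤ ε * ‖t • y‖ := by
      simpa using this
    have : ‖(fderiv ℝ f (x₀ + t • y) - φ'' (t • y)) y‖ ≤ ε * ‖t • y‖ * ‖y‖ :=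
      le_trans (ContinuousLinearMap.le_opNorm _ y)
        (mul_le_mul_of_nonneg_right key (norm_nonneg _))
    have heq : (fderiv ℝ f (x₀ + t • y) - φ'' (t • y)) y = g' t := by
      simp only [ContinuousLinearMap.sub_apply, map_smul, ContinuousLinearMap.smul_apply,
        smul_eq_mul, hg']
    rw [heq] at this
    calc ‖g' t‖ ≤ ε * ‖t • y‖ * ‖y‖ := this
      _ ≤ ε * ‖y‖ ^ 2 := by
          have hty : ‖t • y‖ ≤ ‖y‖ := by
            rw [norm_smul, Real.norm_eq_abs]
            have h1t : |t| ≤ 1 := abs_le.2 ⟨by linarith [ht.1], ht.2⟩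
            calc |t| * ‖y‖ ≤ 1 * ‖y‖ := mul_le_mul_of_nonneg_right h1t (norm_nonneg _)
              _ = ‖y‖ := one_mul _
          calc ε * ‖t • y‖ * ‖y‖ ≤ ε * ‖y‖ * ‖y‖ := by
                exact mul_le_mul_of_nonneg_right
                  (mul_le_mul_of_nonneg_left hty hε.le) (norm_nonneg _)
            _ = ε * ‖y‖ ^ 2 := by ring
  calc |f (x₀ + y) - φ'' y y / 2| = |g 1 - g 0| := by
        have e1 : g 1 = f (x₀ + y) - φ'' y y / 2 := by simp [hg]; ring_nf
        have e0 : g 0 = 0 := by simp [hg, h0]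
        rw [e1, e0, sub_zero]
    _ ≤ ε * ‖y‖ ^ 2 * ‖(1:ℝ) - 0‖ := by
        exact Convex.norm_image_sub_le_of_norm_hasDerivWithin_le hderiv hbound (convex_Icc 0 1)
          (Set.left_mem_Icc.2 zero_le_one) (Set.right_mem_Icc.2 zero_le_one)
    _ = ε * ‖y‖ ^ 2 := by simp


lemma psd_cross' {E : Type*} [NormedAddCommGroup E] [NormedSpace ℝ E]
    (φ : E →L[ℝ] E →L[ℝ] ℝ) (hpsd : ∀ v, 0 ≤ φ v v) (hsymm : ∀ u v, φ u v = φ v u)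
    {y : E} (hy : φ y y = 0) (z : E) : φ y z = 0 := by
  by_contra ha
  set a := φ y z with hadef
  set b := φ z z with hbdef
  have hb0 : 0 ≤ b := hpsd z
  have ha2 : 0 < a ^ 2 := lt_of_le_of_ne (sq_nonneg a) (Ne.symm (pow_ne_zero 2 ha))
  have key : ∀ t : ℝ, 0 ≤ 2 * t * a + t ^ 2 * b := by
    intro t
    have h := hpsd (y + t • z)
    have expand : φ (y + t • z) (y + t • z)
        = φ y y + t * φ y z + t * φ z y + t ^ 2 * φ z z := by
      simp only [map_add, map_smul, ContinuousLinearMap.add_apply,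
        ContinuousLinearMap.smul_apply, smul_eq_mul]
      ring
    rw [expand, hy, hsymm z y] at h
    linarith
  rcases eq_or_lt_of_le hb0 with hb | hb
  · have k := key (-a)
    nlinarith
  · have k := key (-a / b)
    have e : 2 * (-a / b) * a + (-a / b) ^ 2 * b = -(a ^ 2 / b) := by
      field_simp
      ring
    rw [e] at k
    have : 0 < a ^ 2 / b := div_pos ha2 hb
    linarith


lemma vec_zero' (n : ℕ) (A B : Matrix (Fin n) (Fin n) ℝ)
    (hinv : IsUnit (A.map Complex.ofReal + Complex.I • B.map Complex.ofReal))
    (y : Fin n → ℝ) (hy : ∀ j, ∑ i, y i * A i j = 0) (hy' : ∀ j, ∑ i, y i * B i j = 0) :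
    y = 0 := by
  set M := A.map Complex.ofReal + Complex.I • B.map Complex.ofReal with hM
  set z : Fin n → ℂ := fun i => (y i : ℂ) with hz
  have hvm : Matrix.vecMul z M = 0 := by
    funext j
    simp only [Matrix.vecMul, dotProduct, hM, Matrix.add_apply, Matrix.smul_apply,
      Matrix.map_apply, smul_eq_mul, hz, Pi.zero_apply]
    calc ∑ i, (y i : ℂ) * ((A i j : ℂ) + Complex.I * (B i j : ℂ))
        = (↑(∑ i, y i * A i j) : ℂ) + Complex.I * ↑(∑ i, y i * B i j) := by
          push_cast
          rw [Finset.mul_sum]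
          rw [← Finset.sum_add_distrib]
          congr 1; funext i; ring
      _ = 0 := by rw [hy j, hy' j]; simp
  have hinj := Matrix.vecMul_injective_iff_isUnit.mpr hinv (a₁ := z) (a₂ := 0)
  have hz0 : z = 0 := by
    apply hinj
    show Matrix.vecMul z M = Matrix.vecMul 0 M
    rw [hvm, Matrix.zero_vecMul]
  funext i
  have := congrFun hz0 i
  simpa [hz] using this


lemma arith_low' (wj Gj a : ℝ) (hd : (Gj - wj)^2 ≤ a^2) : wj^2/2 - a^2 ≤ Gj^2 := by
  nlinarith [sq_nonneg (wj + 2*(Gj - wj))]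

lemma arith_up' (wj Gj a b : ℝ) (hd : (Gj - wj)^2 ≤ a^2) (hw : wj^2 ≤ b^2) :
    Gj^2 ≤ 2*b^2 + 2*a^2 := by
  nlinarith [sq_nonneg (wj - (Gj - wj))]

lemma basis_decomp' {n : ℕ} (y : EuclideanSpace ℝ (Fin n)) :
    y = ∑ i, y i • EuclideanSpace.single i (1:ℝ) := by
  ext j
  rw [WithLp.ofLp_sum, Finset.sum_apply]
  simp [EuclideanSpace.single_apply]

lemma norm_sq_eq_sum' {n : ℕ} (u : EuclideanSpace ℝ (Fin n)) : ‖u‖^2 = ∑ j, (u j)^2 := by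
  rw [EuclideanSpace.norm_eq, Real.sq_sqrt (by positivity)]
  simp [sq_abs]

lemma grad_coord' {n : ℕ} (f : EuclideanSpace ℝ (Fin n) → ℝ) (x : EuclideanSpace ℝ (Fin n))
    (j : Fin n) : gradient f x j = fderiv ℝ f x (EuclideanSpace.single j 1) := by
  conv_rhs => rw [show fderiv ℝ f x
      = InnerProductSpace.toDual ℝ (EuclideanSpace ℝ (Fin n)) (gradient f x) from
    ((InnerProductSpace.toDual ℝ _).apply_symm_apply _).symm]
  rw [InnerProductSpace.toDual_apply_apply, EuclideanSpace.inner_single_right]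
  simp

end Helpers

/-- The Hessian matrix of `f : ℝ^n → ℝ` at `x`, with entries
`∂²f/∂x_i∂x_j (x) = D²f(x)[e_i, e_j]`. -/
def hessMatrix (n : ℕ) (f : EuclideanSpace ℝ (Fin n) → ℝ)
    (x : EuclideanSpace ℝ (Fin n)) : Matrix (Fin n) (Fin n) ℝ :=
  Matrix.of fun i j =>
    iteratedFDeriv ℝ 2 f x ![EuclideanSpace.single i 1, EuclideanSpace.single j 1]

/-- if `V₁, V₂` are `C²` near `x₀`, `V₁ ≥ 0` near `x₀`, `V₁(x₀) = 0`,
`V₂(x₀) = 0`, `∇V₂(x₀) = 0`, and `V''(x₀) = V₁''(x₀) + iV₂''(x₀)` is invertible, then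
`V₁(x₀+y) + |∇V₂(x₀+y)|² ∼ |y|²` for `y` small. -/
theorem local_quadratic_comparability
    (n : ℕ) (x₀ : EuclideanSpace ℝ (Fin n))
    (V₁ V₂ : EuclideanSpace ℝ (Fin n) → ℝ)
    (hV₁ : ContDiffAt ℝ 2 V₁ x₀) (hV₂ : ContDiffAt ℝ 2 V₂ x₀)
    (hV₁pos : ∀ᶠ x in nhds x₀, 0 ≤ V₁ x)
    (h0 : V₁ x₀ = 0) (h0' : V₂ x₀ = 0) (hg : gradient V₂ x₀ = 0)
    (hinv : IsUnit ((hessMatrix n V₁ x₀).map Complex.ofReal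
        + Complex.I • (hessMatrix n V₂ x₀).map Complex.ofReal)) :
    ∃ c > 0, ∃ C > 0, ∃ r > 0, ∀ y : EuclideanSpace ℝ (Fin n), ‖y‖ ≤ r →
      c * ‖y‖ ^ 2 ≤ V₁ (x₀ + y) + ‖gradient V₂ (x₀ + y)‖ ^ 2 ∧
      V₁ (x₀ + y) + ‖gradient V₂ (x₀ + y)‖ ^ 2 ≤ C * ‖y‖ ^ 2 := by
  rcases Nat.eq_zero_or_pos n with hn | hn
  · subst hn
    refine ⟨1, one_pos, 1, one_pos, 1, one_pos, fun y _ => ?_⟩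
    have hy0 : y = 0 := by ext i; exact absurd i.2 (by omega)
    rw [hy0, add_zero]
    simp [h0, hg]
  -- setup
  set e : Fin n → EuclideanSpace ℝ (Fin n) := fun j => EuclideanSpace.single j 1 with he
  set φ₁ := fderiv ℝ (fderiv ℝ V₁) x₀ with hφ₁def
  set φ₂ := fderiv ℝ (fderiv ℝ V₂) x₀ with hφ₂def
  have hmin : IsLocalMin V₁ x₀ := by
    filter_upwards [hV₁pos] with x hx
    rw [h0]; exact hx
  have hd1 : fderiv ℝ V₁ x₀ = 0 := hmin.fderiv_eq_zero
  have hd2 : fderiv ℝ V₂ x₀ = 0 := by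
    have := congrArg (InnerProductSpace.toDual ℝ (EuclideanSpace ℝ (Fin n))) hg
    rwa [gradient, LinearIsometryEquiv.apply_symm_apply, map_zero] at this
  have hsymm1 : ∀ u v, φ₁ u v = φ₁ v u := fun u v =>
    (hV₁.isSymmSndFDerivAt (by norm_num)).eq u v
  have expand : ∀ (φ : EuclideanSpace ℝ (Fin n) →L[ℝ] EuclideanSpace ℝ (Fin n) →L[ℝ] ℝ)
      (y v : EuclideanSpace ℝ (Fin n)), φ y v = ∑ i, y i * φ (e i) v := by
    intro φ y v
    conv_lhs => rw [basis_decomp' y]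
    rw [map_sum, ContinuousLinearMap.sum_apply]
    exact Finset.sum_congr rfl fun i _ => by
      rw [map_smul]; simp [smul_eq_mul, he]
  have hA : ∀ i j, hessMatrix n V₁ x₀ i j = φ₁ (e i) (e j) := by
    intro i j
    simp only [hessMatrix, Matrix.of_apply, iteratedFDeriv_two_apply, hφ₁def]
    simp [he]
  have hB : ∀ i j, hessMatrix n V₂ x₀ i j = φ₂ (e i) (e j) := by
    intro i j
    simp only [hessMatrix, Matrix.of_apply, iteratedFDeriv_two_apply, hφ₂def]
    simp [he]
  -- positive semidefiniteness of φ₁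
  have hpsd : ∀ v, 0 ≤ φ₁ v v := by
    intro v
    rcases eq_or_ne v 0 with rfl | hv
    · simp
    by_contra hneg
    push_neg at hneg
    have hv2 : 0 < ‖v‖ := norm_pos_iff.2 hv
    set ε := -(φ₁ v v) / (4 * ‖v‖^2) with hεdef
    have hεpos : 0 < ε := by
      apply div_pos (by linarith) (by positivity)
    obtain ⟨δ, hδpos, htay⟩ := taylor2' V₁ x₀ hV₁ h0 hd1 hεpos
    obtain ⟨δ', hδ'pos, hpos⟩ := Metric.eventually_nhds_iff.1 hV₁pos
    set t := min δ (δ'/2) / ‖v‖ with htdef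
    have htpos : 0 < t := by positivity
    set y := t • v with hydef
    have hynorm : ‖y‖ = min δ (δ'/2) := by
      rw [hydef, norm_smul, Real.norm_eq_abs, abs_of_pos htpos, htdef]
      field_simp
    have h1 : ‖y‖ ≤ δ := by rw [hynorm]; exact min_le_left _ _
    have h2 : 0 ≤ V₁ (x₀ + y) := by
      apply hpos
      rw [dist_self_add_left]
      calc ‖y‖ ≤ δ'/2 := by rw [hynorm]; exact min_le_right _ _
        _ < δ' := by linarith
    have h3 := htay y h1
    have hq : φ₁ y y = t^2 * (φ₁ v v) := by
      rw [hydef]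
      simp only [map_smul, ContinuousLinearMap.smul_apply, smul_eq_mul]
      ring
    have hyn2 : ‖y‖^2 = t^2 * ‖v‖^2 := by
      rw [hydef, norm_smul, Real.norm_eq_abs, mul_pow, sq_abs]
    have hεv : ε * ‖v‖^2 = -(φ₁ v v) / 4 := by
      rw [hεdef]; field_simp
    have habs := (abs_le.1 h3).2
    rw [hq, hyn2] at habs
    have ht2 : 0 < t^2 := by positivity
    clear * - h2 habs hεv ht2 hneg
    nlinarith [h2, habs, hεv, ht2, hneg]
  -- positivity of the quadratic form q
  have hqpos : ∀ y : EuclideanSpace ℝ (Fin n), y ≠ 0 →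
      0 < φ₁ y y + ∑ j, (φ₂ y (e j))^2 := by
    intro y hy
    have hsum : 0 ≤ ∑ j, (φ₂ y (e j))^2 := Finset.sum_nonneg fun j _ => sq_nonneg _
    rcases (add_nonneg (hpsd y) hsum).lt_or_eq with h | h
    · exact h
    exfalso
    have hq1 : φ₁ y y = 0 := le_antisymm (by linarith) (hpsd y)
    have hsum0 : ∑ j, (φ₂ y (e j))^2 = 0 := by linarith
    have hq2 : ∀ j, φ₂ y (e j) = 0 := by
      intro j
      have := (Finset.sum_eq_zero_iff_of_nonneg (fun j _ => sq_nonneg (φ₂ y (e j)))).1 hsum0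
        j (Finset.mem_univ j)
      exact pow_eq_zero_iff (by norm_num) |>.1 this
    have hcross : ∀ z, φ₁ y z = 0 := psd_cross' φ₁ hpsd hsymm1 hq1
    set yv : Fin n → ℝ := fun i => y i with hyvdef
    have hyA : ∀ j, ∑ i, yv i * hessMatrix n V₁ x₀ i j = 0 := by
      intro j
      have : ∑ i, yv i * hessMatrix n V₁ x₀ i j = φ₁ y (e j) := by
        rw [expand φ₁ y (e j)]
        exact Finset.sum_congr rfl fun i _ => by rw [hA]
      rw [this, hcross]
    have hyB : ∀ j, ∑ i, yv i * hessMatrix n V₂ x₀ i j = 0 := by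
      intro j
      have : ∑ i, yv i * hessMatrix n V₂ x₀ i j = φ₂ y (e j) := by
        rw [expand φ₂ y (e j)]
        exact Finset.sum_congr rfl fun i _ => by rw [hB]
      rw [this, hq2]
    have hyv0 : yv = 0 := vec_zero' n _ _ hinv yv hyA hyB
    apply hy
    ext i
    exact congrFun hyv0 i
  -- continuity of q
  have hcont : Continuous fun y : EuclideanSpace ℝ (Fin n) =>
      φ₁ y y + ∑ j, (φ₂ y (e j))^2 := by
    fun_prop
  -- minimum on the sphere
  have hsphere_ne : (sphere (0 : EuclideanSpace ℝ (Fin n)) 1).Nonempty := by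
    refine ⟨e ⟨0, hn⟩, ?_⟩
    rw [mem_sphere_zero_iff_norm, he]
    simp [EuclideanSpace.norm_single]
  obtain ⟨y₀, hy₀mem, hy₀min⟩ := (isCompact_sphere (0 : EuclideanSpace ℝ (Fin n)) 1).exists_isMinOn
    hsphere_ne hcont.continuousOn
  set c₀ := φ₁ y₀ y₀ + ∑ j, (φ₂ y₀ (e j))^2 with hc₀def
  have hy₀1 : ‖y₀‖ = 1 := mem_sphere_zero_iff_norm.1 hy₀mem
  have hc₀pos : 0 < c₀ := hqpos y₀ (fun h => by rw [h] at hy₀1; simp at hy₀1)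
  have hlow : ∀ y : EuclideanSpace ℝ (Fin n),
      c₀ * ‖y‖^2 ≤ φ₁ y y + ∑ j, (φ₂ y (e j))^2 := by
    intro y
    rcases eq_or_ne y 0 with rfl | hy
    · simp
    have hny : 0 < ‖y‖ := norm_pos_iff.2 hy
    set u := ‖y‖⁻¹ • y with hudef
    have hu1 : ‖u‖ = 1 := norm_smul_inv_norm hy
    have humem : u ∈ sphere (0 : EuclideanSpace ℝ (Fin n)) 1 :=
      mem_sphere_zero_iff_norm.2 hu1
    have hmin2 : c₀ ≤ φ₁ u u + ∑ j, (φ₂ u (e j))^2 := isMinOn_iff.1 hy₀min u humem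
    have hyu : y = ‖y‖ • u := (smul_inv_smul₀ hny.ne' y).symm
    have hscale : φ₁ y y + ∑ j, (φ₂ y (e j))^2
        = ‖y‖^2 * (φ₁ u u + ∑ j, (φ₂ u (e j))^2) := by
      conv_lhs => rw [hyu]
      simp only [map_smul, ContinuousLinearMap.smul_apply, smul_eq_mul]
      rw [mul_add, Finset.mul_sum]
      congr 1
      · ring
      · exact Finset.sum_congr rfl fun j _ => by ring
    rw [hscale]
    calc c₀ * ‖y‖^2 = ‖y‖^2 * c₀ := mul_comm _ _
      _ ≤ ‖y‖^2 * (φ₁ u u + ∑ j, (φ₂ u (e j))^2) :=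
        mul_le_mul_of_nonneg_left hmin2 (sq_nonneg _)
  -- epsilons and deltas
  set ε₁ := c₀ / 8 with hε₁def
  have hε₁pos : 0 < ε₁ := by rw [hε₁def]; linarith
  set ε₂ := min 1 (c₀ / (8 * ((n : ℝ) + 1))) with hε₂def
  have hnpos : (0:ℝ) ≤ (n:ℝ) := Nat.cast_nonneg n
  have hε₂pos : 0 < ε₂ := by
    rw [hε₂def]
    apply lt_min one_pos
    apply div_pos hc₀pos (by positivity)
  have hε₂le1 : ε₂ ≤ 1 := min_le_left _ _
  have hε₂leb : ε₂ * (8 * ((n:ℝ) + 1)) ≤ c₀ := by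
    have := min_le_right 1 (c₀ / (8 * ((n : ℝ) + 1)))
    rw [← hε₂def] at this
    exact (le_div_iff₀ (by positivity)).1 this
  have hnε₂ : (n : ℝ) * ε₂^2 ≤ c₀ / 8 := by
    clear * - hε₂pos hε₂le1 hε₂leb hnpos
    clear_value ε₂ c₀
    nlinarith [hε₂leb, hε₂pos.le,
      mul_le_mul_of_nonneg_left hε₂le1 (mul_nonneg hnpos hε₂pos.le)]
  obtain ⟨δ₁, hδ₁pos, htay⟩ := taylor2' V₁ x₀ hV₁ h0 hd1 hε₁pos
  have hφ₂der : HasFDerivAt (fderiv ℝ V₂) φ₂ x₀ :=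
    ((hV₂.fderiv_right (m := 1) (by norm_num)).differentiableAt one_ne_zero).hasFDerivAt
  obtain ⟨δ₂, hδ₂pos, hgradb⟩ := Metric.eventually_nhds_iff.1 (hφ₂der.isLittleO.bound hε₂pos)
  refine ⟨c₀/4, by linarith, ‖φ₁‖/2 + c₀ + 2*(n:ℝ)*‖φ₂‖^2 + 2*(n:ℝ) + 1, ?_,
    min δ₁ (δ₂/2), by positivity, fun y hy => ?_⟩
  · have h1 := norm_nonneg φ₁
    have h2 := sq_nonneg ‖φ₂‖
    clear * - h1 h2 hc₀pos hnpos
    clear_value c₀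
    nlinarith [mul_nonneg hnpos h2]
  have hy1 : ‖y‖ ≤ δ₁ := hy.trans (min_le_left _ _)
  have hy2 : dist (x₀ + y) x₀ < δ₂ := by
    rw [dist_self_add_left]
    calc ‖y‖ ≤ δ₂/2 := hy.trans (min_le_right _ _)
      _ < δ₂ := by linarith
  have hV₁y := htay y hy1
  have hgb : ‖fderiv ℝ V₂ (x₀ + y) - φ₂ y‖ ≤ ε₂ * ‖y‖ := by
    have := hgradb hy2
    rwa [hd2, sub_zero, add_sub_cancel_left] at this
  have hcoord : ∀ j, |gradient V₂ (x₀ + y) j - φ₂ y (e j)| ≤ ε₂ * ‖y‖ := by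
    intro j
    have h1 : gradient V₂ (x₀ + y) j = fderiv ℝ V₂ (x₀ + y) (e j) := by
      rw [he]; exact grad_coord' V₂ (x₀ + y) j
    rw [h1]
    have heq : fderiv ℝ V₂ (x₀ + y) (e j) - φ₂ y (e j)
        = (fderiv ℝ V₂ (x₀ + y) - φ₂ y) (e j) := by simp
    rw [heq]
    have hop := (fderiv ℝ V₂ (x₀ + y) - φ₂ y).le_opNorm (e j)
    have hne : ‖e j‖ = 1 := by rw [he]; simp [EuclideanSpace.norm_single]
    rw [hne, mul_one, Real.norm_eq_abs] at hop
    exact hop.trans hgb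
  set G : Fin n → ℝ := fun j => gradient V₂ (x₀ + y) j with hGdef
  set w : Fin n → ℝ := fun j => φ₂ y (e j) with hwdef
  have hnormsq : ‖gradient V₂ (x₀ + y)‖^2 = ∑ j, (G j)^2 := norm_sq_eq_sum' _
  have hwb : ∀ j, |w j| ≤ ‖φ₂‖ * ‖y‖ := by
    intro j
    have h1 := φ₂.le_opNorm₂ y (e j)
    have hne : ‖e j‖ = 1 := by rw [he]; simp [EuclideanSpace.norm_single]
    rw [hne, mul_one, Real.norm_eq_abs] at h1
    exact h1
  have hdsq : ∀ j, (G j - w j)^2 ≤ (ε₂*‖y‖)^2 := by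
    intro j
    have h := hcoord j
    have h' : -(ε₂*‖y‖) ≤ G j - w j := by
      have := (abs_le.1 h).1; linarith
    exact sq_le_sq' h' (le_trans (le_abs_self _) h)
  have hlowpt : ∀ j, (w j)^2/2 - (ε₂*‖y‖)^2 ≤ (G j)^2 := by
    intro j
    exact arith_low' (w j) (G j) (ε₂*‖y‖) (hdsq j)
  have hwsq : ∀ j, (w j)^2 ≤ (‖φ₂‖*‖y‖)^2 := by
    intro j
    obtain ⟨ha, hb⟩ := abs_le.1 (hwb j)
    exact sq_le_sq' ha hb
  have huppt : ∀ j, (G j)^2 ≤ 2*(‖φ₂‖*‖y‖)^2 + 2*(ε₂*‖y‖)^2 := by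
    intro j
    exact arith_up' (w j) (G j) (ε₂*‖y‖) (‖φ₂‖*‖y‖) (hdsq j) (hwsq j)
  have hsumlow : (∑ j, (w j)^2)/2 - (n:ℝ)*(ε₂*‖y‖)^2 ≤ ∑ j, (G j)^2 := by
    have h := Finset.sum_le_sum (fun j _ => hlowpt j) (s := Finset.univ)
    rw [Finset.sum_sub_distrib, Finset.sum_const, Finset.card_univ, Fintype.card_fin,
      nsmul_eq_mul, ← Finset.sum_div] at h
    exact h
  have hsumup : ∑ j, (G j)^2 ≤ 2*(n:ℝ)*(‖φ₂‖*‖y‖)^2 + 2*(n:ℝ)*(ε₂*‖y‖)^2 := by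
    have h := Finset.sum_le_sum (fun j _ => huppt j) (s := Finset.univ)
    rw [Finset.sum_const, Finset.card_univ, Fintype.card_fin, nsmul_eq_mul] at h
    calc ∑ j, (G j)^2 ≤ (n:ℝ) * (2*(‖φ₂‖*‖y‖)^2 + 2*(ε₂*‖y‖)^2) := h
      _ = 2*(n:ℝ)*(‖φ₂‖*‖y‖)^2 + 2*(n:ℝ)*(ε₂*‖y‖)^2 := by ring
  have hVlow : φ₁ y y/2 - ε₁*‖y‖^2 ≤ V₁ (x₀+y) := by
    have := (abs_le.1 hV₁y).1; linarith
  have hVup : V₁ (x₀+y) ≤ φ₁ y y/2 + ε₁*‖y‖^2 := by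
    have := (abs_le.1 hV₁y).2; linarith
  have hφ₁b : φ₁ y y ≤ ‖φ₁‖*‖y‖^2 := by
    have h := φ₁.le_opNorm₂ y y
    rw [Real.norm_eq_abs] at h
    calc φ₁ y y ≤ |φ₁ y y| := le_abs_self _
      _ ≤ ‖φ₁‖*‖y‖*‖y‖ := h
      _ = ‖φ₁‖*‖y‖^2 := by ring
  have hqy : c₀ * ‖y‖^2 ≤ φ₁ y y + ∑ j, (w j)^2 := hlow y
  have hkey : (n:ℝ)*(ε₂*‖y‖)^2 ≤ c₀/8 * ‖y‖^2 := by
    have := mul_le_mul_of_nonneg_right hnε₂ (sq_nonneg ‖y‖)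
    calc (n:ℝ)*(ε₂*‖y‖)^2 = (n:ℝ)*ε₂^2*‖y‖^2 := by ring
      _ ≤ c₀/8*‖y‖^2 := this
  have hε₂sq : ε₂^2 ≤ 1 := by
    rw [sq]
    exact mul_le_one₀ hε₂le1 hε₂pos.le hε₂le1
  rw [hε₁def] at hVlow hVup
  constructor
  · rw [hnormsq]
    clear * - hsumlow hVlow hqy hkey
    clear_value G w ε₂ c₀
    nlinarith [hsumlow, hVlow, hqy, hkey]
  · rw [hnormsq]
    have h2n : 2*(n:ℝ)*(ε₂*‖y‖)^2 ≤ 2*(n:ℝ)*‖y‖^2 := by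
      have hy2 := sq_nonneg ‖y‖
      clear * - hy2 hnpos hε₂sq hε₂pos
      clear_value ε₂
      nlinarith [mul_le_mul_of_nonneg_left hε₂sq (mul_nonneg hnpos hy2)]
    have hε₁c : c₀/8*‖y‖^2 ≤ c₀*‖y‖^2 := by
      have hy2 := sq_nonneg ‖y‖
      clear * - hy2 hc₀pos
      clear_value c₀
      nlinarith
    have hy2 := sq_nonneg ‖y‖
    clear * - hsumup hVup hφ₁b h2n hε₁c hy2
    clear_value G ε₂ c₀
    nlinarith [hsumup, hVup, hφ₁b, h2n, hε₁c, hy2]
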